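/- arXiv:1104.2784 — 5 statements merged into one kernel-verified Lean document; each statement's English description precedes it below -/
import Mathlib

section
/- For every ν ≥ 1 there exists a real constant C_ν > 0 such that for every h = (h_0, …, h_ν) ∈ ℂ^{ν+1} for which the autocorrelation coefficients c_k = Σ_{m=0}^{ν−k} h_m · conj(h_{m+k}), k = 1, …, ν, are not all zero, the Lebesgue measure of the set D(h) = { u ∈ [−π, π] : |H(e^{−ju})|² > ‖h‖² } satisfies |D(h)| ≥ C_ν. (One may take C_ν = C·(2(2ν+1)³)^{−1/2} where C is the absolute constant in the McGehee–Pigno–Smith L¹ lower bound for exponential sums.) -/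
set_option maxHeartbeats 1000000

open MeasureTheory Finset

noncomputable def Hf (ν : ℕ) (h : ℕ → ℂ) (u : ℝ) : ℂ :=
  ∑ m ∈ Finset.range (ν + 1), h m * Complex.exp (-(Complex.I * m * u))

noncomputable def norm2 (ν : ℕ) (h : ℕ → ℂ) : ℝ :=
  ∑ m ∈ Finset.range (ν + 1), ‖h m‖ ^ 2

noncomputable def ac (ν : ℕ) (h : ℕ → ℂ) (k : ℕ) : ℂ :=
  ∑ m ∈ Finset.range (ν + 1 - k), h m * (starRingEnd ℂ) (h (m + k))

def Dset (ν : ℕ) (h : ℕ → ℂ) : Set ℝ :=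
  {u | u ∈ Set.Icc (-Real.pi) Real.pi ∧ norm2 ν h < ‖Hf ν h u‖ ^ 2}

/- ### Auxiliary combinatorial lemmas -/

lemma MDLB.lt_part (N : ℕ) (F : ℕ → ℕ → ℂ) :
    ∑ p ∈ ((Finset.range (N+1)) ×ˢ (Finset.range (N+1))).filter (fun p => p.1 < p.2),
      F p.1 p.2
    = ∑ k ∈ Finset.Icc 1 N, ∑ m ∈ Finset.range (N+1-k), F m (m+k) := by
  rw [Finset.sum_sigma']
  refine Finset.sum_nbij' (fun p => ⟨p.2 - p.1, p.1⟩) (fun q => (q.2, q.2 + q.1)) ?_ ?_ ?_ ?_ ?_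
  · rintro ⟨m, n⟩ hp
    simp only [Finset.mem_filter, Finset.mem_product, Finset.mem_range] at hp
    simp only [Finset.mem_sigma, Finset.mem_Icc, Finset.mem_range]
    omega
  · rintro ⟨k, m⟩ hq
    simp only [Finset.mem_sigma, Finset.mem_Icc, Finset.mem_range] at hq
    simp only [Finset.mem_filter, Finset.mem_product, Finset.mem_range]
    omega
  · rintro ⟨m, n⟩ hp
    simp only [Finset.mem_filter, Finset.mem_product, Finset.mem_range] at hp
    simp only [Prod.mk.injEq]
    exact ⟨trivial, by omega⟩
  · rintro ⟨k, m⟩ hq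
    simp only [Finset.mem_sigma, Finset.mem_Icc, Finset.mem_range] at hq
    simp only [Sigma.mk.inj_iff, heq_eq_eq]
    exact ⟨by omega, trivial⟩
  · rintro ⟨m, n⟩ hp
    simp only [Finset.mem_filter, Finset.mem_product, Finset.mem_range] at hp
    simp only []
    congr 1
    omega

lemma MDLB.key_split (N : ℕ) (F : ℕ → ℕ → ℂ) :
    ∑ p ∈ (Finset.range (N+1)) ×ˢ (Finset.range (N+1)), F p.1 p.2
    = (∑ m ∈ Finset.range (N+1), F m m)
      + ((∑ k ∈ Finset.Icc 1 N, ∑ m ∈ Finset.range (N+1-k), F m (m+k))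
      + (∑ k ∈ Finset.Icc 1 N, ∑ m ∈ Finset.range (N+1-k), F (m+k) m)) := by
  classical
  rw [← Finset.sum_filter_add_sum_filter_not ((Finset.range (N+1)) ×ˢ (Finset.range (N+1)))
    (fun p => p.1 = p.2)]
  congr 1
  · refine Finset.sum_nbij' (fun p => p.1) (fun m => (m, m)) ?_ ?_ ?_ ?_ ?_ <;>
      rintro ⟨m, n⟩ h <;> simp_all [Finset.mem_filter]
  · rw [← Finset.sum_filter_add_sum_filter_not
      (((Finset.range (N+1)) ×ˢ (Finset.range (N+1))).filter (fun p => ¬ p.1 = p.2))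
      (fun p => p.1 < p.2), Finset.filter_filter, Finset.filter_filter]
    congr 1
    · rw [← MDLB.lt_part N F]
      apply Finset.sum_congr _ (fun _ _ => rfl)
      apply Finset.filter_congr
      intro p _; simp; omega
    · rw [← MDLB.lt_part N (fun m n => F n m)]
      refine Finset.sum_nbij' (fun p => (p.2, p.1)) (fun p => (p.2, p.1)) ?_ ?_ ?_ ?_ ?_ <;>
        rintro ⟨m, n⟩ h <;> simp_all [Finset.mem_filter] <;> omega

lemma MDLB.prod_sum_expand (N : ℕ) (a b : ℕ → ℂ) (z w : ℂ) (hzw : z * w = 1) :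
    (∑ m ∈ Finset.range (N+1), a m * z ^ m) * (∑ n ∈ Finset.range (N+1), b n * w ^ n)
    = (∑ m ∈ Finset.range (N+1), a m * b m)
      + ∑ k ∈ Finset.Icc 1 N,
          ((∑ m ∈ Finset.range (N+1-k), a m * b (m+k)) * w ^ k
         + (∑ m ∈ Finset.range (N+1-k), a (m+k) * b m) * z ^ k) := by
  have hpow : ∀ i j : ℕ, z ^ i * w ^ (i + j) = w ^ j := by
    intro i j
    rw [pow_add, ← mul_assoc, ← mul_pow, hzw, one_pow, one_mul]
  have hpow' : ∀ i j : ℕ, z ^ (i + j) * w ^ i = z ^ j := by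
    intro i j
    rw [pow_add, mul_comm (z ^ i) (z ^ j), mul_assoc, ← mul_pow, hzw, one_pow, mul_one]
  rw [Finset.sum_mul_sum, ← Finset.sum_product',
    MDLB.key_split N (fun m n => a m * z ^ m * (b n * w ^ n))]
  congr 1
  · apply Finset.sum_congr rfl
    intro m _
    calc a m * z ^ m * (b m * w ^ m) = a m * b m * (z ^ m * w ^ (m + 0)) := by ring_nf
    _ = a m * b m := by rw [hpow m 0, pow_zero, mul_one]
  · rw [← Finset.sum_add_distrib]
    apply Finset.sum_congr rfl
    intro k _
    congr 1
    · rw [Finset.sum_mul]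
      apply Finset.sum_congr rfl
      intro m _
      calc a m * z ^ m * (b (m+k) * w ^ (m+k)) = a m * b (m+k) * (z ^ m * w ^ (m + k)) := by ring
      _ = a m * b (m+k) * w ^ k := by rw [hpow m k]
    · rw [Finset.sum_mul]
      apply Finset.sum_congr rfl
      intro m _
      calc a (m+k) * z ^ (m+k) * (b m * w ^ m) = a (m+k) * b m * (z ^ (m+k) * w ^ m) := by ring
      _ = a (m+k) * b m * z ^ k := by rw [hpow' m k]

/- ### The trigonometric polynomial `g` -/

noncomputable def MDLB.gfun (ν : ℕ) (h : ℕ → ℂ) (u : ℝ) : ℂ :=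
  ∑ k ∈ Finset.Icc 1 ν,
    (ac ν h k * Complex.exp (Complex.I * k * u)
      + (starRingEnd ℂ) (ac ν h k) * Complex.exp (-(Complex.I * k * u)))

lemma MDLB.Hf_mul_conj (ν : ℕ) (h : ℕ → ℂ) (u : ℝ) :
    Hf ν h u * (starRingEnd ℂ) (Hf ν h u) = (norm2 ν h : ℂ) + MDLB.gfun ν h u := by
  have hz : ∀ m : ℕ, Complex.exp (-(Complex.I * m * u)) = Complex.exp (-(Complex.I * u)) ^ m := by
    intro m
    rw [← Complex.exp_nat_mul]
    congr 1
    ring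
  have hw : ∀ m : ℕ, Complex.exp (Complex.I * m * u) = Complex.exp (Complex.I * u) ^ m := by
    intro m
    rw [← Complex.exp_nat_mul]
    congr 1
    ring
  have hconjH : (starRingEnd ℂ) (Hf ν h u)
      = ∑ n ∈ Finset.range (ν + 1), (starRingEnd ℂ) (h n) * Complex.exp (Complex.I * n * u) := by
    rw [Hf, map_sum]
    apply Finset.sum_congr rfl
    intro n _
    rw [map_mul, ← Complex.exp_conj]
    congr 1
    simp [Complex.conj_ofReal]
  have hzw : Complex.exp (-(Complex.I * u)) * Complex.exp (Complex.I * u) = 1 := by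
    rw [← Complex.exp_add]
    simp
  rw [hconjH, Hf]
  simp_rw [hz, hw]
  rw [MDLB.prod_sum_expand ν h (fun n => (starRingEnd ℂ) (h n)) _ _ hzw]
  congr 1
  · rw [norm2, Complex.ofReal_sum]
    apply Finset.sum_congr rfl
    intro m _
    rw [Complex.mul_conj]
    norm_cast
    exact (Complex.sq_norm _).symm
  · rw [MDLB.gfun]
    apply Finset.sum_congr rfl
    intro k hk
    congr 1
    · rw [← hw k, ac]
    · rw [← hz k]
      congr 1
      rw [ac, map_sum]
      apply Finset.sum_congr rfl
      intro m _
      rw [map_mul, Complex.conj_conj]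
      ring

/- ### Integral computations -/

lemma MDLB.integral_c_exp (c : ℂ) (n : ℤ) :
    ∫ u in (-Real.pi)..Real.pi, c * Complex.exp (Complex.I * n * u)
      = if n = 0 then 2 * Real.pi * c else 0 := by
  rw [intervalIntegral.integral_const_mul]
  by_cases hn : n = 0
  · simp [hn, two_mul]
    ring
  · rw [if_neg hn]
    have hc : (Complex.I * n) ≠ 0 := by
      simp [Complex.I_ne_zero, hn]
    rw [show (fun u : ℝ => Complex.exp (Complex.I * n * u)) = fun u : ℝ =>
      Complex.exp ((Complex.I * n) * u) from rfl]
    rw [integral_exp_mul_complex hc]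
    have e1 : Complex.I * n * (Real.pi : ℂ) = n * (Real.pi * Complex.I) := by ring
    have e2 : Complex.I * n * ((-Real.pi : ℝ) : ℂ) = ((-n : ℤ) : ℂ) * (Real.pi * Complex.I) := by
      push_cast; ring
    rw [e1, e2, Complex.exp_int_mul, Complex.exp_int_mul, Complex.exp_pi_mul_I]
    rw [zpow_neg]
    have : ((-1 : ℂ) ^ n)⁻¹ = (-1 : ℂ) ^ n := by
      rw [← inv_zpow]
      norm_num
    rw [this, sub_self, zero_div, mul_zero]

lemma MDLB.cont_c_exp (c : ℂ) (n : ℤ) :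
    Continuous (fun u : ℝ => c * Complex.exp (Complex.I * n * u)) := by
  fun_prop

lemma MDLB.integral_gfun_mul (ν : ℕ) (h : ℕ → ℂ) (k₀ : ℕ) :
    ∫ u in (-Real.pi)..Real.pi, MDLB.gfun ν h u * Complex.exp (-(Complex.I * k₀ * u))
    = if k₀ ∈ Finset.Icc 1 ν then 2 * Real.pi * ac ν h k₀ else 0 := by
  have step : ∀ u : ℝ, MDLB.gfun ν h u * Complex.exp (-(Complex.I * k₀ * u))
      = ∑ k ∈ Finset.Icc 1 ν,
          (ac ν h k * Complex.exp (Complex.I * (((k : ℤ) - (k₀ : ℤ) : ℤ) : ℂ) * u)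
            + (starRingEnd ℂ) (ac ν h k)
              * Complex.exp (Complex.I * ((-(k : ℤ) - (k₀ : ℤ) : ℤ) : ℂ) * u)) := by
    intro u
    rw [MDLB.gfun, Finset.sum_mul]
    apply Finset.sum_congr rfl
    intro k _
    rw [add_mul]
    congr 1
    · rw [mul_assoc, ← Complex.exp_add]
      congr 2
      push_cast
      ring
    · rw [mul_assoc, ← Complex.exp_add]
      congr 2
      push_cast
      ring
  simp_rw [step]
  rw [intervalIntegral.integral_finset_sum]
  swap
  · intro k _
    exact ((MDLB.cont_c_exp _ _).add (MDLB.cont_c_exp _ _)).intervalIntegrable _ _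
  have term : ∀ k ∈ Finset.Icc 1 ν,
      (∫ u in (-Real.pi)..Real.pi,
        (ac ν h k * Complex.exp (Complex.I * (((k : ℤ) - (k₀ : ℤ) : ℤ) : ℂ) * u)
          + (starRingEnd ℂ) (ac ν h k)
            * Complex.exp (Complex.I * ((-(k : ℤ) - (k₀ : ℤ) : ℤ) : ℂ) * u)))
      = if k = k₀ then 2 * Real.pi * ac ν h k else 0 := by
    intro k hk
    rw [intervalIntegral.integral_add ((MDLB.cont_c_exp _ _).intervalIntegrable _ _)
      ((MDLB.cont_c_exp _ _).intervalIntegrable _ _), MDLB.integral_c_exp,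
      MDLB.integral_c_exp]
    simp only [Finset.mem_Icc] at hk
    have h2 : ¬(-(k : ℤ) - (k₀ : ℤ) = 0) := by omega
    rw [if_neg h2, add_zero]
    by_cases hkk : k = k₀
    · rw [if_pos (by omega), if_pos hkk]
    · rw [if_neg (by omega), if_neg hkk]
  rw [Finset.sum_congr rfl term, Finset.sum_ite_eq' (Finset.Icc 1 ν) k₀
    (fun k => 2 * Real.pi * ac ν h k)]

/-- **Lemma 1**: for every `ν ≥ 1` there is a constant `C_ν > 0` such that for every CIR
realization `h ∈ ℂ^{ν+1}` whose autocorrelations `c_1, …, c_ν` are not all zero, the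
Lebesgue measure of `D(h) = {u ∈ [-π, π] : |H(e^{-ju})|² > ‖h‖²}` is at least `C_ν`. -/
theorem measure_Dset_lower_bound (ν : ℕ) (hν : 1 ≤ ν) :
    ∃ C : ℝ, 0 < C ∧ ∀ h : ℕ → ℂ,
      (∃ k ∈ Finset.Icc 1 ν, ac ν h k ≠ 0) →
      C ≤ (volume (Dset ν h)).toReal := by
  refine ⟨Real.pi / (2 * ν), by positivity, ?_⟩
  intro h hne
  set f : ℝ → ℝ := fun u => ‖Hf ν h u‖ ^ 2 - norm2 ν h with hf
  -- the real function f equals g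
  have hfg : ∀ u : ℝ, (f u : ℂ) = MDLB.gfun ν h u := by
    intro u
    have := MDLB.Hf_mul_conj ν h u
    rw [Complex.mul_conj] at this
    have h2 : (MDLB.gfun ν h u) = ((Complex.normSq (Hf ν h u) : ℝ) : ℂ) - (norm2 ν h : ℂ) := by
      rw [this]; ring
    have h3 : ((Complex.normSq (Hf ν h u) : ℝ) : ℂ) = ((‖Hf ν h u‖ ^ 2 : ℝ) : ℂ) := by
      norm_cast
      exact (Complex.sq_norm _).symm
    rw [h2, h3, hf]
    push_cast
    ring
  -- continuity of f
  have hHcont : Continuous (fun u : ℝ => Hf ν h u) := by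
    unfold Hf
    apply continuous_finset_sum
    intro m _
    fun_prop
  have hfcont : Continuous f := by
    rw [hf]
    exact ((continuous_norm.comp hHcont).pow 2).sub continuous_const
  -- choose the max autocorrelation
  obtain ⟨k₀, hk₀mem, hk₀max⟩ := Finset.exists_max_image (Finset.Icc 1 ν)
    (fun k => ‖ac ν h k‖) ⟨1, Finset.mem_Icc.2 ⟨le_refl 1, hν⟩⟩
  obtain ⟨k₁, hk₁mem, hk₁⟩ := hne
  have hcstar : 0 < ‖ac ν h k₀‖ :=
    lt_of_lt_of_le (by simpa [norm_pos_iff] using hk₁) (hk₀max k₁ hk₁mem)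
  set cstar := ‖ac ν h k₀‖ with hcs
  set M : ℝ := 2 * ∑ k ∈ Finset.Icc 1 ν, ‖ac ν h k‖ with hM
  have hMnonneg : 0 ≤ M := by
    rw [hM]
    have : 0 ≤ ∑ k ∈ Finset.Icc 1 ν, ‖ac ν h k‖ :=
      Finset.sum_nonneg fun k _ => norm_nonneg _
    linarith
  -- sup bound |f u| ≤ M
  have hfbound : ∀ u : ℝ, |f u| ≤ M := by
    intro u
    have : |f u| = ‖((f u : ℂ))‖ := by
      rw [Complex.norm_real, Real.norm_eq_abs]
    rw [this, hfg u, MDLB.gfun]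
    calc ‖∑ k ∈ Finset.Icc 1 ν,
          (ac ν h k * Complex.exp (Complex.I * k * u)
            + (starRingEnd ℂ) (ac ν h k) * Complex.exp (-(Complex.I * k * u)))‖
        ≤ ∑ k ∈ Finset.Icc 1 ν, ‖ac ν h k * Complex.exp (Complex.I * k * u)
            + (starRingEnd ℂ) (ac ν h k) * Complex.exp (-(Complex.I * k * u))‖ := by
          exact norm_sum_le _ _
      _ ≤ ∑ k ∈ Finset.Icc 1 ν, 2 * ‖ac ν h k‖ := by
          apply Finset.sum_le_sum
          intro k _
          have e1 : ‖Complex.exp (Complex.I * k * u)‖ = 1 := by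
            rw [Complex.norm_exp]
            simp
          have e2 : ‖Complex.exp (-(Complex.I * k * u))‖ = 1 := by
            rw [Complex.norm_exp]
            simp
          calc ‖ac ν h k * Complex.exp (Complex.I * k * u)
                + (starRingEnd ℂ) (ac ν h k) * Complex.exp (-(Complex.I * k * u))‖
              ≤ ‖ac ν h k * Complex.exp (Complex.I * k * u)‖
                + ‖(starRingEnd ℂ) (ac ν h k)
                  * Complex.exp (-(Complex.I * k * u))‖ := norm_add_le _ _
            _ = 2 * ‖ac ν h k‖ := by
                rw [norm_mul, norm_mul, e1, e2, Complex.norm_conj]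
                ring
      _ = M := by rw [hM, Finset.mul_sum]
  have hpi : (-Real.pi) ≤ Real.pi := by linarith [Real.pi_pos]
  -- ∫ f = 0
  have hintf0 : ∫ u in (-Real.pi)..Real.pi, f u = 0 := by
    have h2 : ∫ u in (-Real.pi)..Real.pi, (f u : ℂ) = 0 := by
      have h1 : (∫ u in (-Real.pi)..Real.pi, (f u : ℂ))
          = ∫ u in (-Real.pi)..Real.pi,
              MDLB.gfun ν h u * Complex.exp (-(Complex.I * (0 : ℕ) * u)) := by
        apply intervalIntegral.integral_congr
        intro u _
        simp only []
        rw [hfg u]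
        simp
      rw [h1, MDLB.integral_gfun_mul ν h 0, if_neg (by simp)]
    rw [intervalIntegral.integral_ofReal] at h2
    exact_mod_cast h2
  -- lower bound for ∫ |f|
  have hintabs : 2 * Real.pi * cstar ≤ ∫ u in (-Real.pi)..Real.pi, |f u| := by
    have key : ‖∫ u in (-Real.pi)..Real.pi,
        MDLB.gfun ν h u * Complex.exp (-(Complex.I * k₀ * u))‖ = 2 * Real.pi * cstar := by
      rw [MDLB.integral_gfun_mul ν h k₀, if_pos hk₀mem, norm_mul, norm_mul,
        Complex.norm_two, Complex.norm_real, Real.norm_eq_abs, abs_of_pos Real.pi_pos]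
    have hnorm : ∀ u : ℝ, ‖MDLB.gfun ν h u * Complex.exp (-(Complex.I * k₀ * u))‖ = |f u| := by
      intro u
      rw [norm_mul, ← hfg u]
      have : ‖Complex.exp (-(Complex.I * k₀ * u))‖ = 1 := by
        rw [Complex.norm_exp]
        simp
      rw [this, mul_one, Complex.norm_real, Real.norm_eq_abs]
    calc 2 * Real.pi * cstar
        = ‖∫ u in (-Real.pi)..Real.pi,
            MDLB.gfun ν h u * Complex.exp (-(Complex.I * k₀ * u))‖ := by
          rw [key]
      _ ≤ ∫ u in (-Real.pi)..Real.pi,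
            ‖MDLB.gfun ν h u * Complex.exp (-(Complex.I * k₀ * u))‖ :=
          intervalIntegral.norm_integral_le_integral_norm hpi
      _ = ∫ u in (-Real.pi)..Real.pi, |f u| := by
          apply intervalIntegral.integral_congr
          intro u _
          exact hnorm u
  -- |f| = 2 max f 0 - f
  have habs_eq : ∀ u : ℝ, |f u| = 2 * max (f u) 0 - f u := by
    intro u
    rcases le_total (f u) 0 with hle | hle
    · rw [abs_of_nonpos hle, max_eq_right hle]
      ring
    · rw [abs_of_nonneg hle, max_eq_left hle]
      ring
  have hmaxcont : Continuous (fun u => max (f u) 0) := hfcont.max continuous_const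
  have hint2max : (∫ u in (-Real.pi)..Real.pi, |f u|)
      = 2 * ∫ u in (-Real.pi)..Real.pi, max (f u) 0 := by
    calc (∫ u in (-Real.pi)..Real.pi, |f u|)
        = ∫ u in (-Real.pi)..Real.pi, (2 * max (f u) 0 - f u) := by
          apply intervalIntegral.integral_congr
          intro u _
          exact habs_eq u
      _ = (∫ u in (-Real.pi)..Real.pi, 2 * max (f u) 0)
            - ∫ u in (-Real.pi)..Real.pi, f u := by
          apply intervalIntegral.integral_sub
          · exact (continuous_const.mul hmaxcont).intervalIntegrable _ _
          · exact hfcont.intervalIntegrable _ _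
      _ = 2 * ∫ u in (-Real.pi)..Real.pi, max (f u) 0 := by
          rw [hintf0, sub_zero, intervalIntegral.integral_const_mul]
  -- the set D
  have hDeq : Dset ν h = Set.Icc (-Real.pi) Real.pi ∩ {u : ℝ | 0 < f u} := by
    ext u
    simp only [Dset, Set.mem_setOf_eq, Set.mem_inter_iff, hf, sub_pos]
  have hDmeas : MeasurableSet (Dset ν h) := by
    rw [hDeq]
    exact measurableSet_Icc.inter (isOpen_lt continuous_const hfcont).measurableSet
  have hDfin : volume (Dset ν h) < ⊤ := by
    have hsub : Dset ν h ⊆ Set.Icc (-Real.pi) Real.pi := by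
      rw [hDeq]
      exact Set.inter_subset_left
    exact lt_of_le_of_lt (measure_mono hsub) measure_Icc_lt_top
  set V : ℝ := (volume (Dset ν h)).toReal with hV
  have hVnonneg : 0 ≤ V := ENNReal.toReal_nonneg
  -- ∫ max f 0 ≤ M * V
  have hintmax : (∫ u in (-Real.pi)..Real.pi, max (f u) 0) ≤ M * V := by
    rw [intervalIntegral.integral_of_le hpi]
    have hind : ∀ x ∈ Set.Ioc (-Real.pi) Real.pi,
        max (f x) 0 ≤ (Dset ν h).indicator (fun _ => M) x := by
      intro x hx
      by_cases hpos : 0 < f x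
      · have hxD : x ∈ Dset ν h := by
          rw [hDeq]
          exact ⟨Set.Ioc_subset_Icc_self hx, hpos⟩
        rw [Set.indicator_of_mem hxD]
        exact max_le (le_trans (le_abs_self _) (hfbound x)) hMnonneg
      · rw [max_eq_right (not_lt.1 hpos)]
        exact Set.indicator_nonneg (fun _ _ => hMnonneg) x
    have hindint : Integrable ((Dset ν h).indicator (fun _ => M)) volume := by
      apply IntegrableOn.integrable_indicator _ hDmeas
      exact integrableOn_const hDfin.ne
    calc (∫ x in Set.Ioc (-Real.pi) Real.pi, max (f x) 0)
        ≤ ∫ x in Set.Ioc (-Real.pi) Real.pi, (Dset ν h).indicator (fun _ => M) x := by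
          apply setIntegral_mono_on
          · exact (hmaxcont.integrableOn_Ioc)
          · exact hindint.integrableOn
          · exact measurableSet_Ioc
          · exact hind
      _ ≤ ∫ x, (Dset ν h).indicator (fun _ => M) x :=
          setIntegral_le_integral hindint
            (Filter.Eventually.of_forall (Set.indicator_nonneg (fun _ _ => hMnonneg)))
      _ = M * V := by
          rw [integral_indicator_const _ hDmeas, smul_eq_mul, mul_comm]; rfl
  -- M ≤ 2 ν cstar
  have hMle : M ≤ 2 * ν * cstar := by
    rw [hM]
    have : ∑ k ∈ Finset.Icc 1 ν, ‖ac ν h k‖ ≤ ν * cstar := by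
      calc ∑ k ∈ Finset.Icc 1 ν, ‖ac ν h k‖
          ≤ ∑ k ∈ Finset.Icc 1 ν, cstar := Finset.sum_le_sum (fun k hk => hk₀max k hk)
        _ = ν * cstar := by
            rw [Finset.sum_const, Nat.card_Icc]
            simp [nsmul_eq_mul]
    nlinarith
  -- finish
  have hchain : 2 * Real.pi * cstar ≤ 2 * (2 * ν * cstar) * V := by
    calc 2 * Real.pi * cstar ≤ ∫ u in (-Real.pi)..Real.pi, |f u| := hintabs
      _ = 2 * ∫ u in (-Real.pi)..Real.pi, max (f u) 0 := hint2max
      _ ≤ 2 * (M * V) := by linarith [hintmax]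
      _ ≤ 2 * (2 * ν * cstar) * V := by nlinarith
  have hν' : (1 : ℝ) ≤ (ν : ℝ) := by exact_mod_cast hν
  rw [div_le_iff₀ (by positivity)]
  nlinarith
end

section
/- For every h = (h_0, …, h_ν) ∈ ℂ^{ν+1} and every u ∈ ℝ, the function f(h, u) = |H(e^{−ju})|² − ‖h‖² satisfies |f(h, u)| ≤ ( 2(2ν+1) Σ_{k=1}^{ν} |c_k|² )^{1/2}, where c_k = Σ_{m=0}^{ν−k} h_m · conj(h_{m+k}). -/
open MeasureTheory Finset

noncomputable def fH (ν : ℕ) (h : ℕ → ℂ) (u : ℝ) : ℝ :=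
  ‖Hf ν h u‖ ^ 2 - norm2 ν h


lemma split_sq (N : ℕ) (F : ℕ → ℕ → ℂ) :
    ∑ m ∈ range N, ∑ n ∈ range N, F m n
      = ∑ n ∈ range N, F n n + ∑ n ∈ range N, ∑ m ∈ range n, (F m n + F n m) := by
  induction N with
  | zero => simp
  | succ N ih =>
    simp only [Finset.sum_range_succ, ih, Finset.sum_add_distrib]
    ring

lemma reindex (N : ℕ) (F : ℕ → ℕ → ℂ) :
    ∑ n ∈ range (N + 1), ∑ m ∈ range n, F m n
      = ∑ k ∈ Icc 1 N, ∑ m ∈ range (N + 1 - k), F m (m + k) := by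
  rw [Finset.sum_sigma', Finset.sum_sigma']
  apply Finset.sum_nbij' (fun p => (⟨p.1 - p.2, p.2⟩ : (_ : ℕ) × ℕ))
    (fun p => (⟨p.2 + p.1, p.2⟩ : (_ : ℕ) × ℕ))
  · rintro ⟨n, m⟩ hp
    simp only [Finset.mem_sigma, Finset.mem_range, Finset.mem_Icc] at *
    omega
  · rintro ⟨k, m⟩ hp
    simp only [Finset.mem_sigma, Finset.mem_range, Finset.mem_Icc] at *
    omega
  · rintro ⟨n, m⟩ hp
    simp only [Finset.mem_sigma, Finset.mem_range] at hp
    simp only [Sigma.mk.inj_iff]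
    constructor
    · omega
    · simp
  · rintro ⟨k, m⟩ hp
    simp only [Finset.mem_sigma, Finset.mem_range, Finset.mem_Icc] at hp
    simp only [Sigma.mk.inj_iff, heq_eq_eq]
    exact ⟨by omega, trivial⟩
  · rintro ⟨n, m⟩ hp
    simp only [Finset.mem_sigma, Finset.mem_range] at hp
    simp only
    congr 1
    omega

lemma key (ν : ℕ) (h : ℕ → ℂ) (u : ℝ) :
    fH ν h u = 2 * (∑ k ∈ Icc 1 ν, ac ν h k * Complex.exp (Complex.I * u * k)).re := by
  classical
  set F : ℕ → ℕ → ℂ := fun m n =>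
    h m * (starRingEnd ℂ) (h n) * Complex.exp (Complex.I * u * ((n : ℂ) - m)) with hF
  have hexp : ∀ m n : ℕ,
      Complex.exp (-(Complex.I * m * u)) * Complex.exp (Complex.I * n * u)
        = Complex.exp (Complex.I * u * ((n : ℂ) - m)) := by
    intro m n
    rw [← Complex.exp_add]
    congr 1
    ring
  have h1 : Hf ν h u * (starRingEnd ℂ) (Hf ν h u)
      = ∑ m ∈ range (ν + 1), ∑ n ∈ range (ν + 1), F m n := by
    rw [Hf, map_sum, Finset.sum_mul_sum]
    refine Finset.sum_congr rfl fun m _ => Finset.sum_congr rfl fun n _ => ?_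
    simp only [map_mul, ← Complex.exp_conj, map_neg, Complex.conj_I, Complex.conj_ofReal,
      Complex.conj_natCast, hF]
    rw [show -(-Complex.I * (n : ℂ) * (u : ℂ)) = Complex.I * n * u by ring]
    rw [mul_mul_mul_comm, hexp]
  have hconjF : ∀ m n : ℕ, (starRingEnd ℂ) (F m n) = F n m := by
    intro m n
    simp only [hF, map_mul, RingHomCompTriple.comp_apply, RingHom.id_apply,
      ← Complex.exp_conj, map_sub, Complex.conj_natCast, map_mul, Complex.conj_I,
      Complex.conj_ofReal]
    rw [show -Complex.I * (u : ℂ) * ((n : ℂ) - m) = Complex.I * u * ((m : ℂ) - n) by ring]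
    ring
  have hdiag : ∀ n : ℕ, F n n = ((‖h n‖ : ℂ) ^ 2) := by
    intro n
    simp only [hF, sub_self, mul_zero, Complex.exp_zero, mul_one, Complex.mul_conj]
    exact_mod_cast congrArg Complex.ofReal (Complex.sq_norm (h n)).symm
  set U : ℂ := ∑ n ∈ range (ν + 1), ∑ m ∈ range n, F m n with hU
  have h2 : Hf ν h u * (starRingEnd ℂ) (Hf ν h u)
      = ((norm2 ν h : ℝ) : ℂ) + (U + (starRingEnd ℂ) U) := by
    rw [h1, split_sq]
    congr 1
    · rw [norm2]
      push_cast
      exact Finset.sum_congr rfl fun n _ => hdiag n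
    · rw [hU, map_sum]
      simp only [map_sum, hconjF, Finset.sum_add_distrib]
  have h3 : U = ∑ k ∈ Icc 1 ν, ac ν h k * Complex.exp (Complex.I * u * k) := by
    rw [hU, reindex]
    refine Finset.sum_congr rfl fun k _ => ?_
    rw [ac, Finset.sum_mul]
    refine Finset.sum_congr rfl fun m _ => ?_
    simp only [hF]
    congr 2
    push_cast
    ring
  have h4 : ‖Hf ν h u‖ ^ 2 = (Hf ν h u * (starRingEnd ℂ) (Hf ν h u)).re := by
    rw [Complex.mul_conj, Complex.sq_norm, Complex.ofReal_re]
  rw [fH, h4, h2, ← h3, Complex.add_re, Complex.ofReal_re, Complex.add_re,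
    Complex.conj_re]
  ring

/-- Equation (13), a Cauchy–Schwarz bound: for every `u`,
`|f(h, u)| ≤ (2(2ν+1) Σ_{k=1}^{ν} |c_k|²)^{1/2}`. -/
theorem fH_cauchy_schwarz_bound (ν : ℕ) (h : ℕ → ℂ) (u : ℝ) :
    |fH ν h u| ≤
      Real.sqrt (2 * (2 * ν + 1) * ∑ k ∈ Finset.Icc 1 ν, ‖ac ν h k‖ ^ 2) := by
  have hS0 : (0:ℝ) ≤ ∑ k ∈ Finset.Icc 1 ν, ‖ac ν h k‖ ^ 2 :=
    Finset.sum_nonneg fun k _ => sq_nonneg _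
  set U := ∑ k ∈ Icc 1 ν, ac ν h k * Complex.exp (Complex.I * u * k) with hU
  have h1 : |fH ν h u| ≤ 2 * ∑ k ∈ Icc 1 ν, ‖ac ν h k‖ := by
    rw [key, abs_mul, abs_two]
    refine mul_le_mul_of_nonneg_left ?_ (by norm_num)
    calc |U.re| ≤ ‖U‖ := Complex.abs_re_le_norm U
      _ ≤ ∑ k ∈ Icc 1 ν, ‖ac ν h k * Complex.exp (Complex.I * u * k)‖ := by
          exact norm_sum_le _ _
      _ = ∑ k ∈ Icc 1 ν, ‖ac ν h k‖ := by
          refine Finset.sum_congr rfl fun k _ => ?_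
          rw [norm_mul, Complex.norm_exp]
          simp [Complex.mul_re, Complex.mul_im]
  have h2 : (2 * ∑ k ∈ Icc 1 ν, ‖ac ν h k‖) ^ 2
      ≤ 2 * (2 * ν + 1) * ∑ k ∈ Finset.Icc 1 ν, ‖ac ν h k‖ ^ 2 := by
    have hcs := sq_sum_le_card_mul_sum_sq (s := Icc 1 ν)
      (f := fun k => ‖ac ν h k‖)
    rw [Nat.card_Icc, Nat.add_sub_cancel] at hcs
    nlinarith [hS0, hcs]
  calc |fH ν h u| ≤ 2 * ∑ k ∈ Icc 1 ν, ‖ac ν h k‖ := h1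
    _ = Real.sqrt ((2 * ∑ k ∈ Icc 1 ν, ‖ac ν h k‖)^2) := by
        rw [Real.sqrt_sq (by positivity)]
    _ ≤ _ := Real.sqrt_le_sqrt h2
end

section
/- For every h = (h_0, …, h_ν) ∈ ℂ^{ν+1} and every snr > 0, (1/2π) ∫_{−π}^{π} du / ( snr·|H(e^{−ju})|² + 1 ) ≤ 1 − (|D(h)|/2π) · ( 1 − 1/(snr·‖h‖² + 1) ); equivalently, the MMSE decision-point SNR satisfies 1 + γ_mmse(snr, h) ≥ [ 1 − (|D(h)|/2π)·(1 − 1/(snr·‖h‖² + 1)) ]^{−1}. -/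
open MeasureTheory Finset

noncomputable def γmmse (ν : ℕ) (snr : ℝ) (h : ℕ → ℂ) : ℝ :=
  ((2 * Real.pi)⁻¹ * ∫ u in (-Real.pi)..Real.pi,
      (snr * ‖Hf ν h u‖ ^ 2 + 1)⁻¹)⁻¹ - 1

lemma Hf_continuous (ν : ℕ) (h : ℕ → ℂ) : Continuous (Hf ν h) := by
  unfold Hf
  apply continuous_finset_sum
  intro m _
  fun_prop

/-- Equation (15): for every CIR realization `h` and every `snr > 0`,
`(1/2π) ∫_{-π}^{π} du/(snr·|H(e^{-ju})|² + 1)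
  ≤ 1 - (|D(h)|/2π)(1 - 1/(snr·‖h‖² + 1))`,
equivalently `1 + γ_mmse(snr, h) ≥ [1 - (|D(h)|/2π)(1 - 1/(snr·‖h‖² + 1))]⁻¹`. -/
theorem mmse_snr_lower_bound (ν : ℕ) (h : ℕ → ℂ) (snr : ℝ) (hsnr : 0 < snr) :
    ((2 * Real.pi)⁻¹ * ∫ u in (-Real.pi)..Real.pi,
        (snr * ‖Hf ν h u‖ ^ 2 + 1)⁻¹) ≤
      1 - (volume (Dset ν h)).toReal / (2 * Real.pi) *
        (1 - (snr * norm2 ν h + 1)⁻¹) ∧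
    (1 - (volume (Dset ν h)).toReal / (2 * Real.pi) *
        (1 - (snr * norm2 ν h + 1)⁻¹))⁻¹ ≤ 1 + γmmse ν snr h := by
  have hπ : (0:ℝ) < Real.pi := Real.pi_pos
  set f : ℝ → ℝ := fun u => (snr * ‖Hf ν h u‖ ^ 2 + 1)⁻¹ with hf
  set c : ℝ := (snr * norm2 ν h + 1)⁻¹ with hcdef
  have hn2 : 0 ≤ norm2 ν h := Finset.sum_nonneg fun m _ => by positivity
  have hden : 0 < snr * norm2 ν h + 1 := by positivity
  have hc0 : 0 < c := inv_pos.2 hden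
  have hc1 : c ≤ 1 := by
    rw [hcdef]
    exact inv_le_one_of_one_le₀ (by nlinarith)
  have hfpos : ∀ u, 0 < f u := fun u => by
    have : (0:ℝ) ≤ ‖Hf ν h u‖ ^ 2 := by positivity
    rw [hf]; positivity
  have hfle1 : ∀ u, f u ≤ 1 := fun u => by
    have h0 : (0:ℝ) ≤ ‖Hf ν h u‖ ^ 2 := by positivity
    rw [hf]
    exact inv_le_one_of_one_le₀ (by nlinarith)
  have hcabs : Continuous fun u : ℝ => ‖Hf ν h u‖ ^ 2 :=
    (continuous_norm.comp (Hf_continuous ν h)).pow 2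
  have hcont : Continuous f := by
    apply Continuous.inv₀
    · exact (continuous_const.mul hcabs).add continuous_const
    · intro x
      have : (0:ℝ) ≤ ‖Hf ν h x‖ ^ 2 := by positivity
      positivity
  -- measurability of D
  have hDmeas : MeasurableSet (Dset ν h) := by
    have h1 : MeasurableSet {u : ℝ | norm2 ν h < ‖Hf ν h u‖ ^ 2} := by
      exact (isOpen_lt continuous_const hcabs).measurableSet
    have : Dset ν h = Set.Icc (-Real.pi) Real.pi ∩
        {u : ℝ | norm2 ν h < ‖Hf ν h u‖ ^ 2} := rfl
    rw [this]
    exact measurableSet_Icc.inter h1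
  have hDsub : Dset ν h ⊆ Set.Icc (-Real.pi) Real.pi := fun u hu => hu.1
  have hDfin : volume (Dset ν h) < ⊤ :=
    lt_of_le_of_lt (measure_mono hDsub) (by simp [Real.volume_Icc])
  have hDle : (volume (Dset ν h)).toReal ≤ 2 * Real.pi := by
    have := measure_mono hDsub (μ := volume)
    rw [Real.volume_Icc] at this
    have h2 : volume (Dset ν h) ≤ ENNReal.ofReal (2 * Real.pi) := by
      convert this using 2; ring
    exact ENNReal.toReal_le_of_le_ofReal (by positivity) h2
  have hDnn : 0 ≤ (volume (Dset ν h)).toReal := ENNReal.toReal_nonneg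
  -- volume of D ∩ Ioc equals volume of D
  have hnull : volume (Dset ν h \ Set.Ioc (-Real.pi) Real.pi) = 0 := by
    apply measure_mono_null (t := {-Real.pi})
    · intro u hu
      have h1 := hDsub hu.1
      have h2 := hu.2
      simp only [Set.mem_Ioc, not_and_or, not_lt, not_le] at h2
      simp only [Set.mem_Icc] at h1
      rcases h2 with h2 | h2
      · simp; linarith
      · exfalso; linarith
    · exact measure_singleton _
  have hvol : volume (Dset ν h ∩ Set.Ioc (-Real.pi) Real.pi) = volume (Dset ν h) := by
    have := measure_inter_add_diff (μ := volume) (Dset ν h) (measurableSet_Ioc (a := -Real.pi) (b := Real.pi))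
    rw [hnull, add_zero] at this
    exact this
  -- integrability
  have hfi : IntervalIntegrable f volume (-Real.pi) Real.pi := hcont.intervalIntegrable _ _
  have hfiOn : IntegrableOn f (Set.Ioc (-Real.pi) Real.pi) volume :=
    (intervalIntegrable_iff_integrableOn_Ioc_of_le (by linarith)).1 hfi
  set g : ℝ → ℝ := fun u => 1 - (Dset ν h).indicator (fun _ => 1 - c) u with hg
  have hind : Integrable ((Dset ν h).indicator (fun _ => 1 - c))
      (volume.restrict (Set.Ioc (-Real.pi) Real.pi)) := by
    apply Integrable.indicator _ hDmeas
    exact integrable_const _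
  have hgi : IntegrableOn g (Set.Ioc (-Real.pi) Real.pi) volume :=
    (integrable_const 1).sub hind
  -- pointwise bound
  have hptwise : ∀ u ∈ Set.Ioc (-Real.pi) Real.pi, f u ≤ g u := by
    intro u _
    show f u ≤ 1 - (Dset ν h).indicator (fun _ => 1 - c) u
    by_cases hu : u ∈ Dset ν h
    · rw [Set.indicator_of_mem hu]
      have hflec : f u ≤ c := by
        rw [hf, hcdef]
        apply inv_anti₀ hden
        have := hu.2
        nlinarith
      linarith
    · rw [Set.indicator_of_notMem hu]
      simpa using hfle1 u
  -- integral of g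
  have hgint : ∫ u in Set.Ioc (-Real.pi) Real.pi, g u =
      2 * Real.pi - (volume (Dset ν h)).toReal * (1 - c) := by
    rw [hg]
    rw [integral_sub (integrable_const 1) hind]
    rw [integral_indicator hDmeas]
    rw [setIntegral_const, setIntegral_const]
    simp only [smul_eq_mul, measureReal_def, Measure.restrict_apply hDmeas, hvol, Real.volume_Ioc]
    rw [ENNReal.toReal_ofReal (by linarith)]
    ring
  -- main integral inequality
  have hIle : (∫ u in (-Real.pi)..Real.pi, f u) ≤
      2 * Real.pi - (volume (Dset ν h)).toReal * (1 - c) := by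
    rw [intervalIntegral.integral_of_le (by linarith : -Real.pi ≤ Real.pi)]
    rw [← hgint]
    exact setIntegral_mono_on hfiOn hgi measurableSet_Ioc hptwise
  have h2π : (0:ℝ) < 2 * Real.pi := by linarith
  have hfirst : ((2 * Real.pi)⁻¹ * ∫ u in (-Real.pi)..Real.pi, f u) ≤
      1 - (volume (Dset ν h)).toReal / (2 * Real.pi) * (1 - c) := by
    have heq : (2 * Real.pi)⁻¹ * (2 * Real.pi - (volume (Dset ν h)).toReal * (1 - c)) =
        1 - (volume (Dset ν h)).toReal / (2 * Real.pi) * (1 - c) := by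
      field_simp
    calc (2 * Real.pi)⁻¹ * ∫ u in (-Real.pi)..Real.pi, f u
        ≤ (2 * Real.pi)⁻¹ * (2 * Real.pi - (volume (Dset ν h)).toReal * (1 - c)) :=
          mul_le_mul_of_nonneg_left hIle (inv_pos.2 h2π).le
      _ = _ := heq
  refine ⟨hfirst, ?_⟩
  -- positivity of the mean
  have hIpos : 0 < ∫ u in (-Real.pi)..Real.pi, f u :=
    intervalIntegral.intervalIntegral_pos_of_pos hfi hfpos (by linarith)
  have hmeanpos : 0 < (2 * Real.pi)⁻¹ * ∫ u in (-Real.pi)..Real.pi, f u := by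
    have := inv_pos.2 h2π
    exact mul_pos this hIpos
  have hγ : 1 + γmmse ν snr h =
      ((2 * Real.pi)⁻¹ * ∫ u in (-Real.pi)..Real.pi, f u)⁻¹ := by
    rw [γmmse, hf]; ring
  rw [hγ]
  exact inv_anti₀ hmeanpos hfirst
end

section
/- Let C' ∈ (0, 1), set R_max = log₂( 1/(1 − C') ), and let 0 < R < R_max. Then for every snr > 0 and every h = (h_0, …, h_ν) ∈ ℂ^{ν+1} satisfying |D(h)| ≥ 2π·C', if 1 + γ_mmse(snr, h) < 2^R, then snr·‖h‖² < (2^R − 1) / (1 − 2^{R − R_max}). -/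
open MeasureTheory Finset

/-- Equations (16)–(18): with `C' ∈ (0,1)`, `R_max = log₂(1/(1-C'))` and `0 < R < R_max`,
every `h` with `|D(h)| ≥ 2π C'` that is in MMSE outage at spectral efficiency `R`
(`1 + γ_mmse(snr, h) < 2^R`) must satisfy `snr·‖h‖² < (2^R - 1)/(1 - 2^{R - R_max})`. -/
theorem mmse_outage_implies_fade (C' : ℝ) (hC : C' ∈ Set.Ioo (0 : ℝ) 1)
    (Rmax : ℝ) (hRmax : Rmax = Real.logb 2 (1 / (1 - C')))
    (R : ℝ) (hR0 : 0 < R) (hRlt : R < Rmax)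
    (ν : ℕ) (h : ℕ → ℂ) (snr : ℝ) (hsnr : 0 < snr)
    (hD : 2 * Real.pi * C' ≤ (volume (Dset ν h)).toReal)
    (hout : 1 + γmmse ν snr h < 2 ^ R) :
    snr * norm2 ν h < (2 ^ R - 1) / (1 - 2 ^ (R - Rmax)) := by
  obtain ⟨hC0, hC1⟩ := hC
  have hpi := Real.pi_pos
  set x := snr * norm2 ν h with hxdef
  have hnorm2 : 0 ≤ norm2 ν h := Finset.sum_nonneg fun m _ => sq_nonneg _
  have hx0 : 0 ≤ x := mul_nonneg hsnr.le hnorm2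
  -- the power p = 2^R
  set p : ℝ := (2 : ℝ) ^ R with hpdef
  have hp1 : 1 < p := Real.one_lt_rpow_iff_of_pos (by norm_num) |>.2 (Or.inl ⟨one_lt_two, hR0⟩)
  have hp0 : 0 < p := by linarith
  -- 2^Rmax = 1/(1-C')
  have h1C : 0 < 1 - C' := by linarith
  have hRmaxval : (2 : ℝ) ^ Rmax = 1 / (1 - C') := by
    rw [hRmax]
    exact Real.rpow_logb (by norm_num) (by norm_num) (by positivity)
  have hpC : p * (1 - C') < 1 := by
    have : p < (2 : ℝ) ^ Rmax := (Real.rpow_lt_rpow_left_iff (by norm_num)).2 hRlt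
    rw [hRmaxval] at this
    calc p * (1 - C') < (1 / (1 - C')) * (1 - C') := by
          exact mul_lt_mul_of_pos_right this h1C
      _ = 1 := by field_simp
  have hRRmax : (2 : ℝ) ^ (R - Rmax) = p * (1 - C') := by
    rw [Real.rpow_sub (by norm_num), hRmaxval, hpdef]
    field_simp
  -- continuity
  have hHfc : Continuous fun u : ℝ => ‖Hf ν h u‖ ^ 2 := by
    apply Continuous.pow
    apply continuous_norm.comp
    unfold Hf
    refine continuous_finset_sum _ fun m _ => continuous_const.mul ?_
    exact Complex.continuous_exp.comp (by continuity)
  set f : ℝ → ℝ := fun u => (snr * ‖Hf ν h u‖ ^ 2 + 1)⁻¹ with hfdef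
  have hden : ∀ u, 0 < snr * ‖Hf ν h u‖ ^ 2 + 1 := fun u => by positivity
  have hfc : Continuous f := ((continuous_const.mul hHfc).add continuous_const).inv₀
    fun u => (hden u).ne'
  have hfpos : ∀ u, 0 < f u := fun u => inv_pos.2 (hden u)
  have hf1 : ∀ u, f u ≤ 1 := fun u => by
    rw [hfdef]
    simp only
    rw [inv_le_one_iff₀]
    right
    nlinarith [sq_nonneg (‖Hf ν h u‖), hsnr]
  -- sets
  set A := Set.Ioc (-Real.pi) Real.pi with hAdef
  set D := Dset ν h with hDdef
  have hDsub : D ⊆ Set.Icc (-Real.pi) Real.pi := fun u hu => hu.1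
  have hDmeas : MeasurableSet D :=
    measurableSet_Icc.inter (measurableSet_lt measurable_const hHfc.measurable)
  have hAfin : volume A ≠ ⊤ := (measure_Ioc_lt_top).ne
  have hint : IntegrableOn f A := (hfc.integrableOn_Icc (a := -Real.pi) (b := Real.pi)).mono_set
    Set.Ioc_subset_Icc_self
  -- measure bookkeeping
  set a := (volume (A ∩ D)).toReal with hadef
  set b := (volume (A \ D)).toReal with hbdef
  have hADfin : volume (A ∩ D) ≠ ⊤ := ((measure_mono Set.inter_subset_left).trans_lt hAfin.lt_top).ne
  have hADfin' : volume (A \ D) ≠ ⊤ := ((measure_mono Set.diff_subset).trans_lt hAfin.lt_top).ne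
  have hab : a + b = 2 * Real.pi := by
    have := measure_inter_add_diff (μ := volume) A hDmeas
    have h2 : (volume A).toReal = 2 * Real.pi := by
      rw [hAdef, Real.volume_Ioc, ENNReal.toReal_ofReal (by linarith)]
      ring
    rw [hadef, hbdef, ← ENNReal.toReal_add hADfin hADfin', this, h2]
  have haD : a = (volume D).toReal := by
    have h0 : volume (D \ A) = 0 := by
      have : D \ A ⊆ {-Real.pi} := by
        intro u hu
        obtain ⟨h1, h2⟩ := hDsub hu.1
        have h3 := hu.2
        simp only [Set.mem_singleton_iff]
        by_contra hne
        exact h3 ⟨lt_of_le_of_ne h1 (Ne.symm hne), h2⟩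
      exact measure_mono_null this (measure_singleton _)
    have : volume (D ∩ A) = volume D := by
      have := measure_inter_add_diff (μ := volume) (t := A) D measurableSet_Ioc
      rw [h0, add_zero] at this
      exact this
    rw [hadef, Set.inter_comm, this]
  have ha2 : 2 * Real.pi * C' ≤ a := haD ▸ hD
  have ha0 : 0 ≤ a := ENNReal.toReal_nonneg
  have hb0 : 0 ≤ b := ENNReal.toReal_nonneg
  -- the integral J
  set J := ∫ u in A, f u with hJdef
  -- upper bound on J
  have hJle : J ≤ a * (x + 1)⁻¹ + b := by
    have hsplit := integral_inter_add_diff (μ := volume) (f := f) hDmeas hint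
    have h1 : ∫ u in A ∩ D, f u ≤ a * (x + 1)⁻¹ := by
      have hle : ∀ u ∈ A ∩ D, f u ≤ (x + 1)⁻¹ := by
        intro u hu
        have hu2 : norm2 ν h < ‖Hf ν h u‖ ^ 2 := hu.2.2
        have : x + 1 ≤ snr * ‖Hf ν h u‖ ^ 2 + 1 := by
          rw [hxdef]
          nlinarith
        exact inv_anti₀ (by positivity) this
      calc ∫ u in A ∩ D, f u ≤ ∫ _ in A ∩ D, (x + 1)⁻¹ :=
            setIntegral_mono_on (hint.mono_set Set.inter_subset_left)
              (integrableOn_const hADfin)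
              (measurableSet_Ioc.inter hDmeas) hle
        _ = a * (x + 1)⁻¹ := by rw [setIntegral_const]; rfl
    have h2 : ∫ u in A \ D, f u ≤ b := by
      calc ∫ u in A \ D, f u ≤ ∫ _ in A \ D, (1 : ℝ) :=
            setIntegral_mono_on (hint.mono_set Set.diff_subset)
              (integrableOn_const hADfin')
              (measurableSet_Ioc.diff hDmeas) (fun u _ => hf1 u)
        _ = b := by rw [setIntegral_const]; simp; rfl
    linarith
  -- lower bound on J : J > 0
  have hJpos : 0 < J := by
    refine setIntegral_pos_iff_support_of_nonneg_ae ?_ ?_ |>.2 ?_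
    · exact Filter.Eventually.of_forall fun u => (hfpos u).le
    · exact hint
    · have : Function.support f = Set.univ := Set.eq_univ_of_forall fun u => (hfpos u).ne'
      rw [this, Set.univ_inter, hAdef, Real.volume_Ioc]
      simp only [ENNReal.ofReal_pos]
      linarith
  -- from outage: 2π/p < J
  have hIJ : (2 * Real.pi)⁻¹ * J > p⁻¹ := by
    have hJeq : (∫ u in (-Real.pi)..Real.pi, f u) = J := by
      rw [intervalIntegral.integral_of_le (by linarith)]
    have hI : ((2 * Real.pi)⁻¹ * J)⁻¹ < p := by
      have := hout
      unfold γmmse at this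
      rw [hJeq] at this
      linarith
    have hIpos : 0 < (2 * Real.pi)⁻¹ * J := by positivity
    calc p⁻¹ < (((2 * Real.pi)⁻¹ * J)⁻¹)⁻¹ := by
          exact inv_strictAnti₀ (by positivity) hI
      _ = (2 * Real.pi)⁻¹ * J := inv_inv _
  -- combine: 2π * p⁻¹ < a*(x+1)⁻¹ + b = a*(x+1)⁻¹ + 2π - a
  have hkey : 2 * Real.pi * p⁻¹ < a * (x + 1)⁻¹ + (2 * Real.pi - a) := by
    have h2pi : (0:ℝ) < 2 * Real.pi := by linarith
    have := mul_lt_mul_of_pos_left hIJ h2pi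
    rw [← mul_assoc, mul_inv_cancel₀ h2pi.ne', one_mul] at this
    linarith [hJle, hab]
  -- deduce C' * x / (x+1) < 1 - p⁻¹, then polynomial inequality
  clear hJle hJpos hIJ haD hD hout hint hf1 hfpos hden hfc hHfc hDsub hDmeas hAfin hADfin hADfin'
  clear_value J a b f D A x p
  clear hJdef hadef hbdef hfdef hDdef hAdef hxdef hpdef hRmaxval hRmax hRlt
  have hx1 : 0 < x + 1 := by linarith
  have h2pi : (0:ℝ) < 2 * Real.pi := by linarith
  have hale : a ≤ 2 * Real.pi := by linarith
  have K : 2 * Real.pi * (x + 1) < a * p + (2 * Real.pi - a) * p * (x + 1) := by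
    have K' := mul_lt_mul_of_pos_right hkey (mul_pos hp0 hx1)
    have e1 : 2 * Real.pi * p⁻¹ * (p * (x + 1)) = 2 * Real.pi * (x + 1) := by
      field_simp
    have e2 : (a * (x + 1)⁻¹ + (2 * Real.pi - a)) * (p * (x + 1))
        = a * p + (2 * Real.pi - a) * p * (x + 1) := by
      field_simp
    rw [e1, e2] at K'
    exact K'
  have K2 : 2 * Real.pi * (x + 1) < 2 * Real.pi * (p * (x + 1) - C' * p * x) := by
    have hprod : 2 * Real.pi * C' * (p * x) ≤ a * (p * x) :=
      mul_le_mul_of_nonneg_right ha2 (by positivity)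
    nlinarith [K, hprod]
  have K3 : x + 1 < p * (x + 1) - C' * p * x := lt_of_mul_lt_mul_left K2 h2pi.le
  have hdpos : 0 < 1 - p * (1 - C') := by linarith
  have hgoal : x * (1 - p * (1 - C')) < p - 1 := by nlinarith [K3]
  rw [hRRmax, lt_div_iff₀ hdpos]
  linarith [hgoal]
end

section
/- Let μ_1, …, μ_m be complex random variables on a common probability space (possibly dependent) such that each |μ_k|² is exponentially distributed with rate λ_k > 0 (as holds when each μ_k is complex Gaussian), and let B > 0. Then liminf_{snr→∞} log P( Σ_{k=1}^{m} 1/(snr·|μ_k|²) > B ) / log snr ≥ −1; that is, the probability in question is exponentially at least snr^{−1}. -/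
open MeasureTheory Filter

/-- **Lemma 3**: for any (possibly correlated) complex random variables `μ_1, …, μ_m`
whose squared moduli are exponentially distributed (as holds for complex Gaussians) and
any `B > 0`, the probability `P(Σ_k 1/(snr·|μ_k|²) > B)` is exponentially at least
`snr⁻¹`: `liminf_{snr→∞} log P(·)/log snr ≥ -1`. -/
theorem noise_enhancement_prob_lower_bound
    {Ω : Type*} [MeasurableSpace Ω] (P : Measure Ω) [IsProbabilityMeasure P]
    (m : ℕ) (μ : Fin m → Ω → ℂ) (lam : Fin m → ℝ) (hlam : ∀ k, 0 < lam k)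
    (hexp : ∀ k, ∀ x : ℝ, 0 ≤ x →
      (P {ω | ‖μ k ω‖ ^ 2 < x}).toReal = 1 - Real.exp (-(lam k * x)))
    (B : ℝ) (hB : 0 < B) :
    -1 ≤ Filter.liminf (fun snr : ℝ =>
        Real.log (P {ω | B < ∑ k : Fin m, (snr * ‖μ k ω‖ ^ 2)⁻¹}).toReal /
          Real.log snr) atTop := by
  rcases Nat.eq_zero_or_pos m with hm | hm
  · subst hm
    have hset : ∀ snr : ℝ,
        {ω : Ω | B < ∑ k : Fin 0, (snr * ‖μ k ω‖ ^ 2)⁻¹} = ∅ := by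
      intro snr; ext ω; simp; linarith
    have : (fun snr : ℝ =>
        Real.log (P {ω | B < ∑ k : Fin 0, (snr * ‖μ k ω‖ ^ 2)⁻¹}).toReal /
          Real.log snr) = fun _ => (0 : ℝ) := by
      funext snr; rw [hset snr]; simp
    rw [this, liminf_const]; norm_num
  · set k0 : Fin m := ⟨0, hm⟩
    set L := lam k0 with hL
    have hL0 : 0 < L := hlam k0
    set a : Ω → ℝ := fun ω => ‖μ k0 ω‖ ^ 2 with ha
    -- probability that a = 0 is zero
    have hp0 : (P {ω | a ω = 0}).toReal = 0 := by
      have hle : ∀ x : ℝ, 0 < x →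
          (P {ω | a ω = 0}).toReal ≤ 1 - Real.exp (-(L * x)) := by
        intro x hx
        rw [← hexp k0 x hx.le]
        refine ENNReal.toReal_mono (measure_ne_top _ _) (measure_mono ?_)
        intro ω hω
        simp only [Set.mem_setOf_eq] at hω ⊢
        show a ω < x
        rw [show a ω = 0 from hω]; exact hx
      have htend : Tendsto (fun x : ℝ => 1 - Real.exp (-(L * x)))
          (nhdsWithin 0 (Set.Ioi 0)) (nhds 0) := by
        have hc : ContinuousAt (fun x : ℝ => 1 - Real.exp (-(L * x))) 0 := by
          fun_prop
        have := hc.tendsto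
        simp only [mul_zero, neg_zero, Real.exp_zero, sub_self] at this
        exact this.mono_left nhdsWithin_le_nhds
      have hle' : (P {ω | a ω = 0}).toReal ≤ 0 :=
        ge_of_tendsto htend (by
          filter_upwards [self_mem_nhdsWithin] with x hx
          exact hle x hx)
      exact le_antisymm hle' ENNReal.toReal_nonneg
    set c : ℝ := L * Real.exp (-1) / B with hc
    have hc0 : 0 < c := by positivity
    set g : ℝ → ℝ := fun snr => Real.log c / Real.log snr - 1 with hg
    have hgt : Tendsto g atTop (nhds (-1)) := by
      have h1 : Tendsto (fun snr : ℝ => Real.log c / Real.log snr) atTop (nhds 0) :=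
        tendsto_const_nhds.div_atTop Real.tendsto_log_atTop
      have := h1.sub (tendsto_const_nhds (x := (1:ℝ)))
      simpa using this
    have hev : ∀ᶠ snr : ℝ in atTop, g snr ≤
        Real.log (P {ω | B < ∑ k : Fin m, (snr * ‖μ k ω‖ ^ 2)⁻¹}).toReal /
          Real.log snr := by
      filter_upwards [eventually_ge_atTop (2 : ℝ), eventually_ge_atTop (L / B)]
        with snr h2 hLB
      have hsnr0 : 0 < snr := by linarith
      have hlog : 0 < Real.log snr := Real.log_pos (by linarith)
      set r : ℝ := (B * snr)⁻¹ with hr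
      have hr0 : 0 < r := by positivity
      -- the key inclusion
      have hincl : {ω | 0 < a ω ∧ a ω < r} ⊆
          {ω | B < ∑ k : Fin m, (snr * ‖μ k ω‖ ^ 2)⁻¹} := by
        intro ω ⟨h1, h2'⟩
        simp only [Set.mem_setOf_eq]
        have hterm : B < (snr * a ω)⁻¹ := by
          have hprod : snr * a ω < B⁻¹ := by
            have : a ω < (B * snr)⁻¹ := h2'
            calc snr * a ω < snr * (B * snr)⁻¹ := by
                  exact mul_lt_mul_of_pos_left this hsnr0
              _ = B⁻¹ := by field_simp
          calc B = (B⁻¹)⁻¹ := by rw [inv_inv]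
            _ < (snr * a ω)⁻¹ := by
                exact inv_strictAnti₀ (by positivity) hprod
        refine lt_of_lt_of_le hterm ?_
        have : (snr * a ω)⁻¹ = (snr * ‖μ k0 ω‖ ^ 2)⁻¹ := by rw [ha]
        rw [this]
        refine Finset.single_le_sum (f := fun k =>
          (snr * ‖μ k ω‖ ^ 2)⁻¹) ?_ (Finset.mem_univ k0)
        intro k _
        positivity
      -- measure bound
      have hsub : {ω | a ω < r} ⊆ {ω | 0 < a ω ∧ a ω < r} ∪ {ω | a ω = 0} := by
        intro ω hω
        rcases eq_or_lt_of_le (sq_nonneg (‖μ k0 ω‖)) with h0 | h0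
        · exact Or.inr h0.symm
        · exact Or.inl ⟨h0, hω⟩
      have hmeas : (P {ω | a ω < r}).toReal ≤
          (P {ω | B < ∑ k : Fin m, (snr * ‖μ k ω‖ ^ 2)⁻¹}).toReal := by
        refine ENNReal.toReal_mono (measure_ne_top _ _) ?_
        calc P {ω | a ω < r} ≤ P ({ω | 0 < a ω ∧ a ω < r} ∪ {ω | a ω = 0}) :=
              measure_mono hsub
          _ ≤ P {ω | 0 < a ω ∧ a ω < r} + P {ω | a ω = 0} := measure_union_le _ _
          _ = P {ω | 0 < a ω ∧ a ω < r} := by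
              have : P {ω | a ω = 0} = 0 := by
                have := hp0
                rwa [ENNReal.toReal_eq_zero_iff, or_iff_left (measure_ne_top _ _)] at this
              rw [this, add_zero]
          _ ≤ _ := measure_mono hincl
      have hval : (P {ω | a ω < r}).toReal = 1 - Real.exp (-(L * r)) := hexp k0 r hr0.le
      -- lower bound 1 - exp(-x) ≥ x * exp(-1) for 0 < x ≤ 1
      set x : ℝ := L * r with hx
      have hx0 : 0 < x := by positivity
      have hBs : L ≤ B * snr := by
        have h := (div_le_iff₀ hB).mp hLB
        nlinarith
      have hx1 : x ≤ 1 := by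
        have hxeq : x = L / (B * snr) := by rw [hx, hr, div_eq_mul_inv]
        rw [hxeq, div_le_one (by positivity)]
        exact hBs
      have hexpbound : x * Real.exp (-1) ≤ 1 - Real.exp (-x) := by
        have h1 : x + 1 ≤ Real.exp x := Real.add_one_le_exp x
        have h2 : Real.exp (-1) ≤ Real.exp (-x) := Real.exp_le_exp.mpr (by linarith)
        have h3 : Real.exp (-x) * Real.exp x = 1 := by
          rw [← Real.exp_add]; simp
        nlinarith [Real.exp_pos (-x), Real.exp_pos x]
      set q : ℝ := (P {ω | B < ∑ k : Fin m, (snr * ‖μ k ω‖ ^ 2)⁻¹}).toReal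
        with hq
      have hq1 : c / snr ≤ q := by
        have : c / snr = x * Real.exp (-1) := by
          rw [hc, hx, hr]; field_simp
        rw [this]
        calc x * Real.exp (-1) ≤ 1 - Real.exp (-x) := hexpbound
          _ = (P {ω | a ω < r}).toReal := hval.symm
          _ ≤ q := hmeas
      have hq0 : 0 < q := lt_of_lt_of_le (by positivity) hq1
      have hlogq : Real.log c - Real.log snr ≤ Real.log q := by
        calc Real.log c - Real.log snr = Real.log (c / snr) :=
              (Real.log_div hc0.ne' hsnr0.ne').symm
          _ ≤ Real.log q := Real.log_le_log (by positivity) hq1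
      show Real.log c / Real.log snr - 1 ≤ Real.log q / Real.log snr
      have heq : Real.log c / Real.log snr - 1
          = (Real.log c - Real.log snr) / Real.log snr := by
        field_simp
      rw [heq]
      gcongr
    -- conclude via liminf comparison
    have hbd : IsBoundedUnder (· ≥ ·) atTop g := hgt.isBoundedUnder_ge
    have hcb : IsCoboundedUnder (· ≥ ·) atTop (fun snr : ℝ =>
        Real.log (P {ω | B < ∑ k : Fin m, (snr * ‖μ k ω‖ ^ 2)⁻¹}).toReal /
          Real.log snr) := by
      refine (isBoundedUnder_of_eventually_le (a := (0:ℝ)) ?_).isCoboundedUnder_ge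
      filter_upwards [eventually_ge_atTop (2 : ℝ)] with snr h2
      have hlog : 0 < Real.log snr := Real.log_pos (by linarith)
      refine div_nonpos_of_nonpos_of_nonneg ?_ hlog.le
      refine Real.log_nonpos ENNReal.toReal_nonneg ?_
      exact ENNReal.toReal_le_of_le_ofReal one_pos.le (by simpa using prob_le_one)
    calc (-1 : ℝ) = liminf g atTop := (hgt.liminf_eq).symm
      _ ≤ _ := liminf_le_liminf hev hbd hcb
end
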